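/- Let G be a finite simple graph in which every vertex has degree at least δ, where δ ≥ 1, let J be a spanning subgraph of G with minimum degree at least δ, and let ω be a permutation of the edges of G. If J ⊆ G_ω, then the edge e_{k(ω)} belongs to J, and e_{k(ω)} has an endpoint w whose degree in G_ω equals δ and all of whose G_ω-edges belong to J. -/
import Mathlib


open Finset

/-- The degree of a vertex `v` in the graph whose edge set is the finite set `s`
of edges (elements of `Sym2 V`). -/
def degIn {V : Type*} [DecidableEq V] (s : Finset (Sym2 V)) (v : V) : ℕ :=
  (s.filter (fun e => v ∈ e)).card

/-- Given an ordering `ω` of a finite set `s` of edges, the set consisting of the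
first `i` edges `e_{ω(1)}, …, e_{ω(i)}`. -/
def prefixEdges {V : Type*} [DecidableEq V] {s : Finset (Sym2 V)}
    (ω : Fin s.card ≃ {e : Sym2 V // e ∈ s}) (i : ℕ) : Finset (Sym2 V) :=
  (Finset.univ.filter (fun j : Fin s.card => (j : ℕ) < i)).image (fun j => (ω j : Sym2 V))

/-- `k(ω)`: the least `i` such that every vertex has degree at least `δ` in the graph
formed by the first `i` edges of the ordering `ω`. -/
noncomputable def stopIndex {V : Type*} [Fintype V] [DecidableEq V] (δ : ℕ)
    {s : Finset (Sym2 V)} (ω : Fin s.card ≃ {e : Sym2 V // e ∈ s}) : ℕ :=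
  sInf {i | ∀ v : V, δ ≤ degIn (prefixEdges ω i) v}

/-- The edge set of `G_ω`, i.e. the first `k(ω)` edges of the ordering `ω`. -/
noncomputable def finalEdges {V : Type*} [Fintype V] [DecidableEq V] (δ : ℕ)
    {s : Finset (Sym2 V)} (ω : Fin s.card ≃ {e : Sym2 V // e ∈ s}) : Finset (Sym2 V) :=
  prefixEdges ω (stopIndex δ ω)

/-- A graph is `δ`-regular: every vertex has exactly `δ` neighbours. -/
def regOfDegree {V : Type*} (J : SimpleGraph V) (δ : ℕ) : Prop :=
  ∀ v : V, (J.neighborSet v).ncard = δ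

/-- `e` is the last edge `e_{k(ω)}` of `G_ω`: it belongs to the first `k(ω)` edges but
not to the first `k(ω) − 1` edges. -/
noncomputable def lastEdgeIs {V : Type*} [Fintype V] [DecidableEq V] (δ : ℕ)
    {s : Finset (Sym2 V)} (ω : Fin s.card ≃ {e : Sym2 V // e ∈ s}) (e : Sym2 V) : Prop :=
  e ∈ prefixEdges ω (stopIndex δ ω) ∧ e ∉ prefixEdges ω (stopIndex δ ω - 1)

lemma mem_prefixEdges {V : Type*} [DecidableEq V] {s : Finset (Sym2 V)}
    (ω : Fin s.card ≃ {e : Sym2 V // e ∈ s}) (i : ℕ) (e : Sym2 V) :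
    e ∈ prefixEdges ω i ↔ ∃ j : Fin s.card, (j : ℕ) < i ∧ (ω j : Sym2 V) = e := by
  simp [prefixEdges]

/-- Let `G` be a finite simple graph with minimum degree at least `δ ≥ 1`, let `J` be a
spanning subgraph of `G` with minimum degree at least `δ`, and let `ω` be an ordering of
the edges of `G`.  If `J ⊆ G_ω`, then the edge `e_{k(ω)}` belongs to `J`, and it has an
endpoint `w` whose degree in `G_ω` equals `δ` and all of whose `G_ω`-edges belong
to `J`. -/
theorem last_edge_in_subgraph_and_tight_endpoint
    {V : Type*} [Fintype V] [DecidableEq V] [Nonempty V]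
    (G J : SimpleGraph V) [DecidableRel G.Adj] [DecidableRel J.Adj]
    (δ : ℕ) (hδ : 1 ≤ δ) (hGdeg : ∀ w : V, δ ≤ G.degree w)
    (hJG : J ≤ G) (hJdeg : ∀ w : V, δ ≤ J.degree w)
    (ω : Fin G.edgeFinset.card ≃ {e : Sym2 V // e ∈ G.edgeFinset})
    (hsub : J.edgeSet ⊆ ↑(finalEdges δ ω)) :
    ∃ f : Sym2 V, lastEdgeIs δ ω f ∧ f ∈ J.edgeSet ∧
      ∃ w ∈ f, degIn (finalEdges δ ω) w = δ ∧
        ∀ e ∈ finalEdges δ ω, w ∈ e → e ∈ J.edgeSet  := by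
  classical
  set k := stopIndex δ ω with hk
  have hfull : prefixEdges ω G.edgeFinset.card = G.edgeFinset := by
    ext e
    simp only [mem_prefixEdges]
    constructor
    · rintro ⟨j, -, rfl⟩; exact (ω j).2
    · intro he; exact ⟨ω.symm ⟨e, he⟩, (ω.symm ⟨e, he⟩).2, by simp⟩
  have hmemfull : G.edgeFinset.card ∈ {i | ∀ v : V, δ ≤ degIn (prefixEdges ω i) v} := by
    intro v
    rw [hfull]
    have hdeg : degIn G.edgeFinset v = G.degree v := by
      rw [degIn, ← SimpleGraph.card_incidenceFinset_eq_degree,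
        SimpleGraph.incidenceFinset_eq_filter]
    rw [hdeg]; exact hGdeg v
  have hne : {i | ∀ v : V, δ ≤ degIn (prefixEdges ω i) v}.Nonempty := ⟨_, hmemfull⟩
  have hkmem : ∀ v : V, δ ≤ degIn (prefixEdges ω k) v := Nat.sInf_mem hne
  have hkcard : k ≤ G.edgeFinset.card := Nat.sInf_le hmemfull
  have hk0 : k ≠ 0 := by
    intro h
    obtain ⟨v⟩ := ‹Nonempty V›
    have := hkmem v
    rw [h] at this
    have h0 : prefixEdges ω 0 = ∅ := by
      ext e; simp [mem_prefixEdges]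
    rw [h0] at this
    simp [degIn] at this
    omega
  have hk1 : k - 1 < k := by omega
  have hnotmem : k - 1 ∉ {i | ∀ v : V, δ ≤ degIn (prefixEdges ω i) v} :=
    Nat.notMem_of_lt_sInf hk1
  simp only [Set.mem_setOf_eq, not_forall, not_le] at hnotmem
  obtain ⟨w, hw⟩ := hnotmem
  have hkc : k - 1 < G.edgeFinset.card := by omega
  set j₀ : Fin G.edgeFinset.card := ⟨k - 1, hkc⟩ with hj₀
  set f : Sym2 V := (ω j₀ : Sym2 V) with hf
  have hins : prefixEdges ω k = insert f (prefixEdges ω (k - 1)) := by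
    ext e
    simp only [Finset.mem_insert, mem_prefixEdges]
    constructor
    · rintro ⟨j, hj, rfl⟩
      rcases Nat.lt_or_ge (j : ℕ) (k - 1) with h | h
      · exact Or.inr ⟨j, h, rfl⟩
      · have : j = j₀ := Fin.ext (show (j:ℕ) = k - 1 by omega)
        exact Or.inl (by rw [this])
    · rintro (rfl | ⟨j, hj, rfl⟩)
      · exact ⟨j₀, show k - 1 < k by omega, rfl⟩
      · exact ⟨j, by omega, rfl⟩
  have hwk : δ ≤ degIn (prefixEdges ω k) w := hkmem w
  have hwf : w ∈ f := by
    by_contra hwf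
    have : degIn (prefixEdges ω k) w = degIn (prefixEdges ω (k - 1)) w := by
      rw [hins, degIn, degIn, Finset.filter_insert, if_neg hwf]
    omega
  have hdegk : degIn (prefixEdges ω k) w = δ := by
    have hle : degIn (prefixEdges ω k) w ≤ degIn (prefixEdges ω (k - 1)) w + 1 := by
      rw [hins, degIn, degIn, Finset.filter_insert, if_pos hwf]
      exact Finset.card_insert_le _ _
    omega
  have hfk : f ∈ prefixEdges ω k := (mem_prefixEdges ω k f).2 ⟨j₀, show k - 1 < k by omega, rfl⟩
  have hfinal : finalEdges δ ω = prefixEdges ω k := rfl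
  -- incidence sets
  set A := (prefixEdges ω k).filter (fun e => w ∈ e) with hA
  set B := J.edgeFinset.filter (fun e => w ∈ e) with hB
  have hBA : B ⊆ A := by
    intro e he
    rw [hB, Finset.mem_filter] at he
    rw [hA, Finset.mem_filter]
    refine ⟨?_, he.2⟩
    have : e ∈ J.edgeSet := SimpleGraph.mem_edgeFinset.1 he.1
    have := hsub this
    rwa [hfinal] at this
  have hcardB : B.card = J.degree w := by
    rw [hB, ← SimpleGraph.incidenceFinset_eq_filter,
      SimpleGraph.card_incidenceFinset_eq_degree]
  have hcardA : A.card = δ := hdegk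
  have hAB : B = A := Finset.eq_of_subset_of_card_le hBA (by rw [hcardA, hcardB]; exact hJdeg w)
  have hall : ∀ e ∈ finalEdges δ ω, w ∈ e → e ∈ J.edgeSet := by
    intro e he hwe
    rw [hfinal] at he
    have : e ∈ A := Finset.mem_filter.2 ⟨he, hwe⟩
    rw [← hAB, hB, Finset.mem_filter] at this
    exact SimpleGraph.mem_edgeFinset.1 this.1
  have hfJ : f ∈ J.edgeSet := hall f (by rwa [hfinal]) hwf
  refine ⟨f, ⟨hfk, ?_⟩, hfJ, w, hwf, hdegk, hall⟩
  rw [mem_prefixEdges]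
  rintro ⟨j, hj, hje⟩
  have : ω j = ω j₀ := Subtype.ext hje
  have : j = j₀ := ω.injective this
  have : (j : ℕ) = k - 1 := this ▸ rfl
  omega
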